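/- Let b be a prime, α, β > 1 reals, let 0 < γ_j^{(1)} ≤ 1 and 0 < γ_j^{(2)} ≤ 1 for all j, and fix s,t ∈ ℕ with s,t ≥ 1. Then for ν > 0, the family ((ρ_{α,γ^{(1)}}(k) · r_{β,γ^{(2)}}(l))^ν)_{(k,l) ∈ ℕ^s × ℤ^t} is summable if and only if ν > max(1/α, 1/β). -/
import Mathlib

open scoped BigOperators

/-- The Walsh-space decay function ρ_{α,γ} : ℕ → ℝ,
    ρ_{α,γ}(0) = 1 and ρ_{α,γ}(k) = γ·b^{-α·⌊log_b k⌋} for k ≥ 1. -/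
noncomputable def rho (b : ℕ) (α γ : ℝ) (k : ℕ) : ℝ :=
  if k = 0 then 1 else γ * (b : ℝ) ^ (-(α * (Nat.log b k : ℝ)))

/-- The Korobov-space decay function r_{β,γ} : ℤ → ℝ,
    r_{β,γ}(0) = 1 and r_{β,γ}(l) = γ·|l|^{-β} for l ≠ 0. -/
noncomputable def rK (β γ : ℝ) (l : ℤ) : ℝ :=
  if l = 0 then 1 else γ * |(l : ℝ)| ^ (-β)

/-- Auxiliary: the modified p-series. -/
lemma aux_nat {c q : ℝ} (hc : 0 < c) :
    Summable (fun n : ℕ => if n = 0 then (1:ℝ) else c * (n:ℝ)^(-q)) ↔ 1 < q := by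
  rw [← summable_nat_add_iff 1]
  simp only [Nat.succ_ne_zero, if_false]
  rw [summable_mul_left_iff hc.ne']
  rw [summable_nat_add_iff 1 (f := fun n : ℕ => (n:ℝ)^(-q))]
  rw [Real.summable_nat_rpow]
  constructor <;> intro h <;> linarith

lemma rho_pow_eq {b : ℕ} (hb : 0 < b) {α γ ν : ℝ} (hγ : 0 < γ) {k : ℕ} (hk : k ≠ 0) :
    rho b α γ k ^ ν = γ ^ ν * (((b ^ Nat.log b k : ℕ) : ℝ)) ^ (-(α * ν)) := by
  have hb' : (0:ℝ) < (b:ℝ) := by exact_mod_cast hb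
  rw [rho, if_neg hk, Real.mul_rpow hγ.le (Real.rpow_nonneg hb'.le _), Nat.cast_pow,
    ← Real.rpow_natCast (b:ℝ) (Nat.log b k), ← Real.rpow_mul hb'.le, ← Real.rpow_mul hb'.le]
  ring_nf

lemma rho_sandwich {b : ℕ} (hb : 2 ≤ b) {α γ ν : ℝ} (hγ : 0 < γ) (hγ1 : γ ≤ 1)
    (hν : 0 < ν) (hα : 0 < α) {k : ℕ} (hk : k ≠ 0) :
    γ ^ ν * (k:ℝ) ^ (-(α*ν)) ≤ rho b α γ k ^ ν ∧
      rho b α γ k ^ ν ≤ (b:ℝ) ^ (α*ν) * (k:ℝ) ^ (-(α*ν)) := by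
  set p := α * ν with hp
  have hp0 : 0 < p := mul_pos hα hν
  have hb' : (1:ℝ) < (b:ℝ) := by exact_mod_cast hb
  have hk' : (0:ℝ) < (k:ℝ) := by positivity
  set m := Nat.log b k with hm
  have hblm : (0:ℝ) < ((b ^ m : ℕ) : ℝ) := by positivity
  have hlow : ((b ^ m : ℕ) : ℝ) ≤ (k:ℝ) := by exact_mod_cast Nat.pow_log_le_self b hk
  have hup : (k:ℝ) ≤ ((b ^ (m+1) : ℕ) : ℝ) := by
    exact_mod_cast (Nat.lt_pow_succ_log_self (by omega) k).le
  rw [rho_pow_eq (by omega) hγ hk, ← hm, ← hp]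
  constructor
  · have h1 : (k:ℝ) ^ (-p) ≤ ((b ^ m : ℕ) : ℝ) ^ (-p) :=
      Real.rpow_le_rpow_of_nonpos hblm hlow (by linarith)
    have hγν : (0:ℝ) < γ ^ ν := Real.rpow_pos_of_pos hγ ν
    nlinarith [Real.rpow_nonneg hk'.le (-p)]
  · have h2 : ((b ^ (m+1) : ℕ) : ℝ) ^ (-p) ≤ (k:ℝ) ^ (-p) :=
      Real.rpow_le_rpow_of_nonpos hk' hup (by linarith)
    have h3 : ((b ^ (m+1) : ℕ) : ℝ) ^ (-p) = (b:ℝ) ^ (-p) * ((b ^ m : ℕ) : ℝ) ^ (-p) := by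
      rw [pow_succ, Nat.cast_mul, Nat.cast_pow, mul_comm,
        Real.mul_rpow (by positivity) (by positivity)]
    have hγν : γ ^ ν ≤ 1 := Real.rpow_le_one hγ.le hγ1 hν.le
    have hb0 : (0:ℝ) < (b:ℝ) := by linarith
    have hbp : (0:ℝ) < (b:ℝ) ^ p := Real.rpow_pos_of_pos hb0 p
    have key : ((b ^ m : ℕ) : ℝ) ^ (-p) ≤ (b:ℝ) ^ p * (k:ℝ) ^ (-p) := by
      have : (b:ℝ) ^ p * ((b:ℝ) ^ (-p) * ((b ^ m : ℕ) : ℝ) ^ (-p)) ≤ (b:ℝ) ^ p * (k:ℝ) ^ (-p) := by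
        rw [h3] at h2
        exact mul_le_mul_of_nonneg_left h2 hbp.le
      rwa [← mul_assoc, ← Real.rpow_add hb0, add_neg_cancel, Real.rpow_zero, one_mul] at this
    have hblmp : (0:ℝ) ≤ ((b ^ m : ℕ) : ℝ) ^ (-p) := Real.rpow_nonneg hblm.le _
    have hγν0 : (0:ℝ) ≤ γ ^ ν := Real.rpow_nonneg hγ.le ν
    nlinarith

lemma rho_summable {b : ℕ} (hb : 2 ≤ b) {α γ ν : ℝ} (hγ : 0 < γ) (hγ1 : γ ≤ 1)
    (hν : 0 < ν) (hα : 0 < α) :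
    Summable (fun k : ℕ => rho b α γ k ^ ν) ↔ 1 < α * ν := by
  have hγν : (0:ℝ) < γ ^ ν := Real.rpow_pos_of_pos hγ ν
  constructor
  · intro h
    rw [← aux_nat (c := γ ^ ν) (q := α * ν) hγν]
    refine h.of_nonneg_of_le (fun n => ?_) (fun n => ?_)
    · split <;> positivity
    · rcases eq_or_ne n 0 with rfl | hn
      · simp [rho]
      · rw [if_neg hn]
        exact (rho_sandwich hb hγ hγ1 hν hα hn).1
  · intro h
    have hbp : (0:ℝ) < (b:ℝ) ^ (α*ν) := Real.rpow_pos_of_pos (by positivity) _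
    refine ((aux_nat (c := (b:ℝ) ^ (α*ν)) hbp).mpr h).of_nonneg_of_le (fun n => ?_) (fun n => ?_)
    · have : 0 < rho b α γ n := by
        rw [rho]; split; · norm_num
        · positivity
      positivity
    · rcases eq_or_ne n 0 with rfl | hn
      · simp [rho]
      · rw [if_neg hn]
        exact (rho_sandwich hb hγ hγ1 hν hα hn).2

lemma rK_summable {β γ ν : ℝ} (hγ : 0 < γ) (hν : 0 < ν) :
    Summable (fun l : ℤ => rK β γ l ^ ν) ↔ 1 < β * ν := by
  have hγν : (0:ℝ) < γ ^ ν := Real.rpow_pos_of_pos hγ ν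
  have key : ∀ n : ℕ, rK β γ (n:ℤ) ^ ν = (if n = 0 then (1:ℝ) else γ^ν * (n:ℝ)^(-(β*ν))) := by
    intro n
    rcases eq_or_ne n 0 with rfl | hn
    · simp [rK]
    · rw [rK, if_neg (by exact_mod_cast hn), if_neg hn]
      rw [Real.mul_rpow hγ.le (Real.rpow_nonneg (abs_nonneg _) _),
        ← Real.rpow_mul (abs_nonneg _)]
      have : |((n:ℤ):ℝ)| = (n:ℝ) := by
        rw [Int.cast_natCast, abs_of_nonneg (by positivity)]
      rw [this, neg_mul]
  have key2 : ∀ n : ℕ, rK β γ (-(n:ℤ)) ^ ν = (if n = 0 then (1:ℝ) else γ^ν * (n:ℝ)^(-(β*ν))) := by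
    intro n
    have h : rK β γ (-(n:ℤ)) = rK β γ (n:ℤ) := by
      rcases eq_or_ne n 0 with rfl | hn
      · norm_num
      · rw [rK, rK, if_neg (by simpa using hn), if_neg (by exact_mod_cast hn)]
        congr 1
        push_cast
        rw [abs_neg]
    rw [h, key]
  rw [summable_int_iff_summable_nat_and_neg]
  simp only [key, key2]
  rw [aux_nat hγν, and_self]

set_option maxHeartbeats 1000000 in
lemma summable_pi_prod {ι : Type*} : ∀ (n : ℕ) (h : Fin n → ι → ℝ),
    (∀ j i, 0 ≤ h j i) → (∀ j, Summable (h j)) →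
    Summable (fun x : Fin n → ι => ∏ j, h j (x j)) := by
  intro n
  induction n with
  | zero =>
    intro h _ _
    haveI : Unique (Fin 0 → ι) := ⟨⟨Fin.elim0⟩, fun f => funext fun i => i.elim0⟩
    haveI : Finite (Fin 0 → ι) := Finite.of_subsingleton
    exact Summable.of_finite
  | succ n ih =>
    intro h hpos hsum
    rw [← (Fin.consEquiv (fun _ : Fin (n+1) => ι)).summable_iff]
    have heq : ((fun x : Fin (n+1) → ι => ∏ j, h j (x j)) ∘
        (Fin.consEquiv (fun _ : Fin (n+1) => ι))) =
        fun p : ι × (Fin n → ι) => h 0 p.1 * ∏ j : Fin n, h j.succ (p.2 j) := by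
      funext p
      simp [Fin.consEquiv, Fin.prod_univ_succ]
    rw [heq]
    have H2 : Summable (fun x : Fin n → ι => ∏ j, h j.succ (x j)) :=
      ih (fun j => h j.succ) (fun j i => hpos _ _) (fun j => hsum _)
    apply Summable.mul_of_nonneg (hsum 0) H2 (fun i => hpos 0 i)
      (fun x => Finset.prod_nonneg fun j _ => hpos _ _)

theorem stmt_6 (b : ℕ) (hb : b.Prime) (α β : ℝ) (hα : 1 < α) (hβ : 1 < β)
    (γ1 γ2 : ℕ → ℝ) (hγ1 : ∀ j, 0 < γ1 j ∧ γ1 j ≤ 1) (hγ2 : ∀ j, 0 < γ2 j ∧ γ2 j ≤ 1)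
    (s t : ℕ) (hs : 1 ≤ s) (ht : 1 ≤ t) (ν : ℝ) (hν : 0 < ν) :
    Summable (fun p : (Fin s → ℕ) × (Fin t → ℤ) =>
        ((∏ j : Fin s, rho b α (γ1 j) (p.1 j)) * (∏ j : Fin t, rK β (γ2 j) (p.2 j))) ^ ν) ↔
      max (1 / α) (1 / β) < ν := by
  have hb2 : 2 ≤ b := hb.two_le
  have hα0 : (0:ℝ) < α := by linarith
  have hβ0 : (0:ℝ) < β := by linarith
  have hrpos : ∀ (j : ℕ) (k : ℕ), 0 < rho b α (γ1 j) k := by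
    intro j k
    rw [rho]
    split
    · norm_num
    · have := (hγ1 j).1
      have hbb : (0:ℝ) < (b:ℝ) := by exact_mod_cast (by omega : 0 < b)
      positivity
  have hKpos : ∀ (j : ℕ) (l : ℤ), 0 < rK β (γ2 j) l := by
    intro j l
    rw [rK]
    split
    · norm_num
    · rename_i hl
      have := (hγ2 j).1
      have habs : (0:ℝ) < |(l:ℝ)| := by
        simp only [abs_pos]
        exact_mod_cast hl
      positivity
  have hfun : (fun p : (Fin s → ℕ) × (Fin t → ℤ) =>
      ((∏ j : Fin s, rho b α (γ1 ↑j) (p.1 j)) * (∏ j : Fin t, rK β (γ2 ↑j) (p.2 j))) ^ ν) =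
      fun p => (∏ j : Fin s, rho b α (γ1 ↑j) (p.1 j) ^ ν) *
        (∏ j : Fin t, rK β (γ2 ↑j) (p.2 j) ^ ν) := by
    funext p
    rw [Real.mul_rpow (Finset.prod_nonneg fun (j : Fin s) _ => (hrpos ↑j (p.1 j)).le)
        (Finset.prod_nonneg fun (j : Fin t) _ => (hKpos ↑j (p.2 j)).le),
      Real.finset_prod_rpow Finset.univ (fun j : Fin s => rho b α (γ1 ↑j) (p.1 j))
        (fun j _ => (hrpos ↑j (p.1 j)).le) ν,
      Real.finset_prod_rpow Finset.univ (fun j : Fin t => rK β (γ2 ↑j) (p.2 j))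
        (fun j _ => (hKpos ↑j (p.2 j)).le) ν]
  rw [hfun]
  constructor
  · intro h
    rw [max_lt_iff]
    constructor
    · -- extract ℕ coordinate
      set j0 : Fin s := ⟨0, hs⟩
      set i1 : ℕ → (Fin s → ℕ) × (Fin t → ℤ) :=
        fun k => (fun j => if j = j0 then k else 0, fun _ => 0) with hi1
      have hinj : Function.Injective i1 := by
        intro k k' he
        have := congrFun (congrArg Prod.fst he) j0
        simpa [hi1] using this
      have hcomp : ∀ k, ((fun p : (Fin s → ℕ) × (Fin t → ℤ) =>
          (∏ j : Fin s, rho b α (γ1 ↑j) (p.1 j) ^ ν) *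
            (∏ j : Fin t, rK β (γ2 ↑j) (p.2 j) ^ ν)) ∘ i1) k
          = rho b α (γ1 (j0:ℕ)) k ^ ν := by
        intro k
        have e1 : ∏ j : Fin s, rho b α (γ1 ↑j) ((i1 k).1 j) ^ ν
            = rho b α (γ1 (j0:ℕ)) k ^ ν := by
          rw [show (∏ j : Fin s, rho b α (γ1 ↑j) ((i1 k).1 j) ^ ν)
              = ∏ j : Fin s, (if j = j0 then rho b α (γ1 (j0:ℕ)) k ^ ν else 1) from
            Finset.prod_congr rfl fun j _ => by
              by_cases hj : j = j0 <;> simp [hi1, hj, rho]]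
          simp
        have e2 : ∏ j : Fin t, rK β (γ2 ↑j) ((i1 k).2 j) ^ ν = 1 := by
          simp [hi1, rK]
        simp only [Function.comp_apply, e1, e2, mul_one]
      have hsum1 : Summable (fun k : ℕ => rho b α (γ1 (j0:ℕ)) k ^ ν) := by
        rw [← funext hcomp]
        exact h.comp_injective hinj
      have := (rho_summable hb2 (hγ1 _).1 (hγ1 _).2 hν hα0).mp hsum1
      rw [div_lt_iff₀ hα0]
      linarith [this]
    · set j0 : Fin t := ⟨0, ht⟩
      set i2 : ℤ → (Fin s → ℕ) × (Fin t → ℤ) :=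
        fun l => (fun _ => 0, fun j => if j = j0 then l else 0) with hi2
      have hinj : Function.Injective i2 := by
        intro k k' he
        have := congrFun (congrArg Prod.snd he) j0
        simpa [hi2] using this
      have hcomp : ∀ l, ((fun p : (Fin s → ℕ) × (Fin t → ℤ) =>
          (∏ j : Fin s, rho b α (γ1 ↑j) (p.1 j) ^ ν) *
            (∏ j : Fin t, rK β (γ2 ↑j) (p.2 j) ^ ν)) ∘ i2) l
          = rK β (γ2 (j0:ℕ)) l ^ ν := by
        intro l
        have e1 : ∏ j : Fin s, rho b α (γ1 ↑j) ((i2 l).1 j) ^ ν = 1 := by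
          simp [hi2, rho]
        have e2 : ∏ j : Fin t, rK β (γ2 ↑j) ((i2 l).2 j) ^ ν
            = rK β (γ2 (j0:ℕ)) l ^ ν := by
          rw [show (∏ j : Fin t, rK β (γ2 ↑j) ((i2 l).2 j) ^ ν)
              = ∏ j : Fin t, (if j = j0 then rK β (γ2 (j0:ℕ)) l ^ ν else 1) from
            Finset.prod_congr rfl fun j _ => by
              by_cases hj : j = j0 <;> simp [hi2, hj, rK]]
          simp
        simp only [Function.comp_apply, e1, e2, one_mul]
      have hsum2 : Summable (fun l : ℤ => rK β (γ2 (j0:ℕ)) l ^ ν) := by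
        rw [← funext hcomp]
        exact h.comp_injective hinj
      have := (rK_summable (hγ2 _).1 hν).mp hsum2
      rw [div_lt_iff₀ hβ0]
      linarith [this]
  · intro h
    rw [max_lt_iff] at h
    have h1 : 1 < α * ν := by
      have := h.1
      rw [div_lt_iff₀ hα0] at this
      linarith
    have h2 : 1 < β * ν := by
      have := h.2
      rw [div_lt_iff₀ hβ0] at this
      linarith
    have S1 : Summable (fun x : Fin s → ℕ => ∏ j : Fin s, rho b α (γ1 ↑j) (x j) ^ ν) :=
      summable_pi_prod s (fun j k => rho b α (γ1 (j:ℕ)) k ^ ν)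
        (fun j k => (Real.rpow_pos_of_pos (hrpos _ _) ν).le)
        (fun j => (rho_summable hb2 (hγ1 _).1 (hγ1 _).2 hν hα0).mpr h1)
    have S2 : Summable (fun y : Fin t → ℤ => ∏ j : Fin t, rK β (γ2 ↑j) (y j) ^ ν) :=
      summable_pi_prod t (fun j l => rK β (γ2 (j:ℕ)) l ^ ν)
        (fun j l => (Real.rpow_pos_of_pos (hKpos _ _) ν).le)
        (fun j => (rK_summable (hγ2 _).1 hν).mpr h2)
    apply Summable.mul_of_nonneg S1 S2
      (fun x => Finset.prod_nonneg fun j _ => (Real.rpow_pos_of_pos (hrpos _ _) ν).le)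
      (fun y => Finset.prod_nonneg fun j _ => (Real.rpow_pos_of_pos (hKpos _ _) ν).le)
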